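/- Let a,b,c be complex numbers with abc ≠ 0, ab ≠ c, and ab ≠ −c, and let f be the binary constraint function (1,a,b,c). Then there exist a nonzero complex constant λ and unary functions u, u', v from Boolean values to complex numbers such that for all Boolean values x and y, NAND₂(x,y) = λ · Σ_{z∈{0,1}} Σ_{w∈{0,1}} Σ_{w'∈{0,1}} f(x,w)·f(z,w)·v(w)·f(y,w')·f(z,w')·v(w')·u(x)·u(y)·u'(z). (That is, NAND₂ is acyclic-T-constructible from {f,u,u',v}.) -/

import Mathlib

/-- Binary NAND constraint: 0 if both inputs are 1, else 1. -/
def NAND2 (x y : Bool) : ℂ := if x = true ∧ y = true then 0 else 1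

theorem stmt_13 (a b c : ℂ) (habc : a * b * c ≠ 0)
    (hne1 : a * b ≠ c) (hne2 : a * b ≠ -c)
    (f : Bool → Bool → ℂ)
    (hf00 : f false false = 1) (hf01 : f false true = a)
    (hf10 : f true false = b) (hf11 : f true true = c) :
    ∃ lam : ℂ, lam ≠ 0 ∧ ∃ u u' v : Bool → ℂ,
      ∀ x y : Bool,
        NAND2 x y = lam * ∑ z : Bool, ∑ w : Bool, ∑ w' : Bool,
          f x w * f z w * v w * f y w' * f z w' * v w' * u x * u y * u' z := by
  have ha : a ≠ 0 := fun h => habc (by simp [h])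
  have hb : b ≠ 0 := fun h => habc (by simp [h])
  have hc : c ≠ 0 := fun h => habc (by simp [h])
  have hd : c - a * b ≠ 0 := sub_ne_zero.mpr (Ne.symm hne1)
  have hs : a * b + c ≠ 0 := fun h => hne2 (by linear_combination h)
  have hD : b ^ 2 * c ^ 2 * (a ^ 2 * b ^ 2 - c ^ 2) ≠ 0 := by
    refine mul_ne_zero (mul_ne_zero (pow_ne_zero _ hb) (pow_ne_zero _ hc)) ?_
    intro h
    have h2 : (a * b - c) * (a * b + c) = 0 := by linear_combination h
    rcases mul_eq_zero.mp h2 with h1 | h1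
    · exact hne1 (by linear_combination h1)
    · exact hs h1
  obtain ⟨v0, hv0⟩ := IsAlgClosed.exists_pow_nat_eq (-c ^ 2 / (b * (c - a * b))) zero_lt_two
  obtain ⟨v1, hv1⟩ := IsAlgClosed.exists_pow_nat_eq (-b ^ 2 / (a * c * (c - a * b))) zero_lt_two
  have H0 : v0 ^ 2 * (b * (c - a * b)) = -c ^ 2 := by
    rw [hv0, div_mul_cancel₀ _ (mul_ne_zero hb hd)]
  have H1 : v1 ^ 2 * (a * c * (a * b - c)) = b ^ 2 := by
    rw [hv1, show a * c * (a * b - c) = -(a * c * (c - a * b)) by ring, mul_neg,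
      div_mul_cancel₀ _ (mul_ne_zero (mul_ne_zero ha hc) hd), neg_neg]
  refine ⟨(b ^ 2 * c ^ 2 * (a ^ 2 * b ^ 2 - c ^ 2))⁻¹, inv_ne_zero hD,
    (fun x => if x then a * b + c else b * c),
    (fun z => if z then -a else b * c),
    (fun w => if w then v1 else v0), ?_⟩
  intro x y
  rw [inv_mul_eq_div, eq_div_iff hD]
  cases x <;> cases y <;>
    simp only [NAND2, Fintype.sum_bool, hf00, hf01, hf10, hf11, if_true, if_false,
      Bool.false_eq_true, and_self, and_true, and_false, true_and, ite_true, ite_false,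
      zero_mul, one_mul]
  · linear_combination -(b*c)^2 * H0 - (b*c)^2*a^2 * H1
  · linear_combination -(b*c)*(a*b+c)*b * H0 - (b*c)*(a*b+c)*a*c * H1
  · linear_combination -(b*c)*(a*b+c)*b * H0 - (b*c)*(a*b+c)*a*c * H1
  · linear_combination -(a*b+c)^2*b^2 * H0 - (a*b+c)^2*c^2 * H1
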